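/- Let p > 1, N ≥ 2 an integer, k ∈ ℝ and 0 < a ≤ π/2. Suppose H : [0, a) → ℝ is continuous on [0, a), differentiable on (0, a), with H(0) = 0, and satisfies the H-equation on (0, a). Define y(x) = exp(∫₀ˣ H(t) dt) for x ∈ [0, a). Then y is twice differentiable on (0, a) and differentiable at 0, with y(0) = 1, y'(0) = 0, y(x) > 0 for all x ∈ [0, a), and y satisfies the profile equation on (0, a). -/

import Mathlib

noncomputable section
open Real Set Filter Topology

/-- `y` satisfies the profile equation (for parameters `p`, `N`, `k`) on the set `I`. -/
def ProfileEqOn (p : ℝ) (N : ℕ) (k : ℝ) (y : ℝ → ℝ) (I : Set ℝ) : Prop :=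
  ∀ x ∈ I,
    ((p - 1) * (deriv y x) ^ 2 + k ^ 2 * (y x) ^ 2) * deriv (deriv y) x =
      ((3 - 2 * p) * k + p - (N : ℝ)) * k * y x * (deriv y x) ^ 2
        + (k * (1 - p) + p - (N : ℝ)) * k ^ 3 * (y x) ^ 3
        + (2 - (N : ℝ)) * deriv y x * Real.cot x * ((deriv y x) ^ 2 + k ^ 2 * (y x) ^ 2)

/-- `H` satisfies the first-order H-equation (for parameters `p`, `N`, `k`) on the set `I`. -/
def HEqOn (p : ℝ) (N : ℕ) (k : ℝ) (H : ℝ → ℝ) (I : Set ℝ) : Prop :=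
  ∀ x ∈ I,
    ((p - 1) * (H x) ^ 2 + k ^ 2) * deriv H x =
      (1 - p) * ((H x) ^ 2 + k ^ 2) ^ 2
        + ((H x) ^ 2 + k ^ 2) * (k * (p - (N : ℝ)) + (2 - (N : ℝ)) * H x * Real.cot x)

/-- If `H` solves the H-equation on `(0,a)` with `H(0) = 0`, then
`y(x) = exp(∫₀ˣ H)` is a positive solution of the profile equation on `(0,a)` with
`y(0) = 1` and `y'(0) = 0`. -/
theorem profile_from_H (p : ℝ) (hp : 1 < p) (N : ℕ) (hN : 2 ≤ N) (k : ℝ)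
    (a : ℝ) (ha0 : 0 < a) (ha : a ≤ π / 2)
    (H : ℝ → ℝ)
    (hHc : ContinuousOn H (Ico 0 a))
    (hHd : ∀ x ∈ Ioo (0 : ℝ) a, DifferentiableAt ℝ H x)
    (hH0 : H 0 = 0)
    (hHeq : HEqOn p N k H (Ioo 0 a)) :
    ∀ y : ℝ → ℝ, y = (fun x => Real.exp (∫ t in (0 : ℝ)..x, H t)) →
      (∀ x ∈ Ioo (0 : ℝ) a, DifferentiableAt ℝ y x ∧ DifferentiableAt ℝ (deriv y) x) ∧
      DifferentiableWithinAt ℝ y (Ici 0) 0 ∧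
      y 0 = 1 ∧
      derivWithin y (Ici 0) 0 = 0 ∧
      (∀ x ∈ Ico (0 : ℝ) a, 0 < y x) ∧
      ProfileEqOn p N k y (Ioo 0 a) := by
  intro y hy
  set F : ℝ → ℝ := fun x => ∫ t in (0:ℝ)..x, H t with hF
  have hyF : y = fun x => Real.exp (F x) := hy
  -- interval integrability
  have hint : ∀ x ∈ Ico (0:ℝ) a, IntervalIntegrable H MeasureTheory.volume 0 x := by
    intro x hx
    apply ContinuousOn.intervalIntegrable
    apply hHc.mono
    rw [uIcc_of_le hx.1]
    exact fun t ht => ⟨ht.1, lt_of_le_of_lt ht.2 hx.2⟩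
  have hHcont : ContinuousOn H (Ioo 0 a) := fun x hx =>
    (hHd x hx).continuousAt.continuousWithinAt
  -- derivative of F on the interior
  have hFd : ∀ x ∈ Ioo (0:ℝ) a, HasDerivAt F (H x) x := by
    intro x hx
    exact intervalIntegral.integral_hasDerivAt_right (hint x ⟨hx.1.le, hx.2⟩)
      (hHcont.stronglyMeasurableAtFilter isOpen_Ioo x hx) (hHd x hx).continuousAt
  have hyd : ∀ x ∈ Ioo (0:ℝ) a, HasDerivAt y (H x * y x) x := by
    intro x hx
    have := (hFd x hx).exp
    rw [hyF]
    simpa [mul_comm] using this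
  have hderiv : ∀ x ∈ Ioo (0:ℝ) a, deriv y x = H x * y x := fun x hx => (hyd x hx).deriv
  -- deriv y eventually equals H * y near points of Ioo 0 a
  have hev : ∀ x ∈ Ioo (0:ℝ) a, deriv y =ᶠ[𝓝 x] fun t => H t * y t := by
    intro x hx
    filter_upwards [isOpen_Ioo.mem_nhds hx] with t ht using hderiv t ht
  have hyd2 : ∀ x ∈ Ioo (0:ℝ) a,
      HasDerivAt (deriv y) ((deriv H x + H x ^ 2) * y x) x := by
    intro x hx
    have h1 : HasDerivAt (fun t => H t * y t)
        (deriv H x * y x + H x * (H x * y x)) x :=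
      ((hHd x hx).hasDerivAt).mul (hyd x hx)
    have h2 : HasDerivAt (deriv y) (deriv H x * y x + H x * (H x * y x)) x :=
      h1.congr_of_eventuallyEq (hev x hx)
    convert h2 using 1; ring
  have hderiv2 : ∀ x ∈ Ioo (0:ℝ) a,
      deriv (deriv y) x = (deriv H x + H x ^ 2) * y x := fun x hx => (hyd2 x hx).deriv
  -- positivity
  have hypos : ∀ x ∈ Ico (0:ℝ) a, 0 < y x := by
    intro x hx; rw [hyF]; exact Real.exp_pos _
  have hy0 : y 0 = 1 := by rw [hyF]; simp [hF]
  -- one-sided derivative at 0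
  have hIcomem : Ico (0:ℝ) a ∈ 𝓝[>] (0:ℝ) :=
    mem_of_superset (Ioo_mem_nhdsGT_of_mem ⟨le_refl 0, ha0⟩) (fun t ht => ⟨ht.1.le, ht.2⟩)
  have hmeas0 : StronglyMeasurableAtFilter H (𝓝[>] (0:ℝ)) MeasureTheory.volume :=
    ⟨Ico 0 a, hIcomem, hHc.aestronglyMeasurable measurableSet_Ico⟩
  have hcw0 : ContinuousWithinAt H (Ioi 0) 0 :=
    (hHc 0 ⟨le_refl 0, ha0⟩).mono_of_mem_nhdsWithin hIcomem
  have hF0 : HasDerivWithinAt F (H 0) (Ici 0) 0 :=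
    intervalIntegral.integral_hasDerivWithinAt_right (hint 0 ⟨le_refl 0, ha0⟩) hmeas0 hcw0
  have hy0' : HasDerivWithinAt y (Real.exp (F 0) * H 0) (Ici 0) 0 := by
    rw [hyF]; exact hF0.exp
  have hy0'' : HasDerivWithinAt y 0 (Ici 0) 0 := by
    rw [hH0, mul_zero] at hy0'; exact hy0'
  refine ⟨fun x hx => ⟨(hyd x hx).differentiableAt, (hyd2 x hx).differentiableAt⟩,
    hy0''.differentiableWithinAt, hy0,
    hy0''.derivWithin (uniqueDiffOn_Ici 0 0 self_mem_Ici), hypos, ?_⟩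
  -- the profile equation
  intro x hx
  have heq := hHeq x hx
  rw [hderiv x hx, hderiv2 x hx]
  have hyx : 0 < y x := hypos x ⟨hx.1.le, hx.2⟩
  linear_combination (y x) ^ 3 * heq
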